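/- arXiv:2202.09055 — 2 statements merged into one kernel-verified Lean document; each statement's English description precedes it below -/
import Mathlib

section
/- For every α ∈ (0,1) there exists a constant C = C(α,T) > 0 such that for all x ∈ [0,π] and all 0 ≤ s < t ≤ T, ∫_0^s ∫_0^π |G_{t−r}(x,z) − G_{s−r}(x,z)|² dz dr + ∫_s^t ∫_0^π |G_{t−r}(x,z)|² dz dr ≤ C|t−s|^{(3/4)α}. -/
/-- `φ_j(x) = √(2/π)·sin(jx)`. -/
noncomputable def phi (j : ℕ) (x : ℝ) : ℝ := Real.sqrt (2 / Real.pi) * Real.sin (j * x)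

/-- The Green function `G_t(x,y) = Σ_{j=1}^∞ e^{−j⁴t} φ_j(x) φ_j(y)` of `∂_t + Δ²`
on `(0,π)` with Dirichlet boundary conditions. -/
noncomputable def G (t x y : ℝ) : ℝ :=
  ∑' j : ℕ, Real.exp (-((j : ℝ) + 1) ^ 4 * t) * phi (j + 1) x * phi (j + 1) y


open MeasureTheory intervalIntegral Real

lemma sin_mul_sin_eq (a b : ℝ) :
    Real.sin a * Real.sin b = (Real.cos (a - b) - Real.cos (a + b)) / 2 := by
  rw [Real.cos_sub, Real.cos_add]; ring

lemma integral_cos_kz {c : ℝ} (hc : c ≠ 0) :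
    ∫ z in (0:ℝ)..Real.pi, Real.cos (c * z) = Real.sin (c * Real.pi) / c := by
  rw [intervalIntegral.integral_comp_mul_left (fun x => Real.cos x) hc]
  simp [integral_cos, div_eq_inv_mul]

lemma orth (m n : ℕ) :
    ∫ z in (0:ℝ)..Real.pi, Real.sin (((m:ℝ)+1) * z) * Real.sin (((n:ℝ)+1) * z)
      = if m = n then Real.pi / 2 else 0 := by
  have h1 : ∀ z : ℝ, Real.sin (((m:ℝ)+1) * z) * Real.sin (((n:ℝ)+1) * z)
      = (Real.cos (((m:ℝ) - n) * z) - Real.cos (((m:ℝ) + n + 2) * z)) / 2 := by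
    intro z
    rw [sin_mul_sin_eq]
    ring_nf
  simp_rw [h1]
  have hint1 : IntervalIntegrable (fun z => Real.cos (((m:ℝ) - n) * z)) volume 0 Real.pi :=
    (Real.continuous_cos.comp (continuous_const.mul continuous_id)).intervalIntegrable 0 Real.pi
  have hint2 : IntervalIntegrable (fun z => Real.cos (((m:ℝ) + n + 2) * z)) volume 0 Real.pi :=
    (Real.continuous_cos.comp (continuous_const.mul continuous_id)).intervalIntegrable 0 Real.pi
  rw [intervalIntegral.integral_div, intervalIntegral.integral_sub hint1 hint2]
  have h2 : ∫ z in (0:ℝ)..Real.pi, Real.cos (((m:ℝ) + n + 2) * z) = 0 := by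
    rw [integral_cos_kz (by positivity)]
    have : ((m:ℝ) + n + 2) * Real.pi = ((m + n + 2 : ℕ) : ℝ) * Real.pi := by push_cast; ring
    rw [this, Real.sin_nat_mul_pi, zero_div]
  rcases eq_or_ne m n with h | h
  · subst h
    simp [h2]
  · have hd : ((m:ℝ) - n) ≠ 0 := by
      have : (m:ℝ) ≠ (n:ℝ) := by exact_mod_cast h
      exact sub_ne_zero.2 this
    rw [integral_cos_kz hd, h2, if_neg h]
    have : ((m:ℝ) - n) * Real.pi = ((m - n : ℤ) : ℝ) * Real.pi := by push_cast; ring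
    rw [this, Real.sin_int_mul_pi]
    norm_num

set_option maxHeartbeats 1000000 in
lemma parseval (c : ℕ → ℝ) (hc : Summable fun j => |c j|) :
    ∫ z in (0:ℝ)..Real.pi, (∑' j : ℕ, c j * Real.sin (((j:ℝ)+1) * z)) ^ 2
      = Real.pi / 2 * ∑' j : ℕ, (c j)^2 := by
  have hπ : (0:ℝ) ≤ Real.pi := Real.pi_pos.le
  set f : ℕ → ℝ → ℝ := fun j z => c j * Real.sin (((j:ℝ)+1) * z) with hf
  have hnorm : ∀ z : ℝ, Summable fun j => ‖f j z‖ := by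
    intro z
    apply Summable.of_nonneg_of_le (fun j => norm_nonneg _) _ hc
    intro j
    rw [Real.norm_eq_abs, abs_mul]
    exact mul_le_of_le_one_right (abs_nonneg _) (Real.abs_sin_le_one _)
  have hsq : ∀ z : ℝ, (∑' j : ℕ, f j z) ^ 2 = ∑' p : ℕ × ℕ, f p.1 z * f p.2 z := by
    intro z
    rw [sq, tsum_mul_tsum_of_summable_norm (hnorm z) (hnorm z)]
  have hsq' : ∀ z : ℝ, (∑' j : ℕ, c j * Real.sin (((j:ℝ)+1) * z)) ^ 2
      = ∑' p : ℕ × ℕ, f p.1 z * f p.2 z := hsq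
  simp_rw [hsq']
  have hcont : ∀ p : ℕ × ℕ, Continuous (fun z => f p.1 z * f p.2 z) := fun p =>
    ((continuous_const.mul (Real.continuous_sin.comp (continuous_const.mul continuous_id))).mul
      (continuous_const.mul (Real.continuous_sin.comp (continuous_const.mul continuous_id))))
  have hsummul : Summable fun p : ℕ × ℕ => |c p.1| * |c p.2| :=
    hc.mul_of_nonneg hc (fun j => abs_nonneg _) (fun j => abs_nonneg _)
  have hbd : ∀ (p : ℕ × ℕ) (z : ℝ), ‖f p.1 z * f p.2 z‖ ≤ |c p.1| * |c p.2| := by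
    intro p z
    rw [norm_mul]
    have h1 : ‖f p.1 z‖ ≤ |c p.1| := by
      rw [Real.norm_eq_abs, abs_mul]
      exact mul_le_of_le_one_right (abs_nonneg _) (Real.abs_sin_le_one _)
    have h2 : ‖f p.2 z‖ ≤ |c p.2| := by
      rw [Real.norm_eq_abs, abs_mul]
      exact mul_le_of_le_one_right (abs_nonneg _) (Real.abs_sin_le_one _)
    exact mul_le_mul h1 h2 (norm_nonneg _) (abs_nonneg _)
  rw [intervalIntegral.integral_of_le hπ]
  have hInt : ∀ p : ℕ × ℕ, IntegrableOn (fun z => f p.1 z * f p.2 z) (Set.Ioc 0 Real.pi) volume :=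
    fun p => (hcont p).integrableOn_Ioc
  have hIntSum : Summable fun p : ℕ × ℕ => ∫ z in Set.Ioc (0:ℝ) Real.pi, ‖f p.1 z * f p.2 z‖ := by
    apply Summable.of_nonneg_of_le
      (fun p => integral_nonneg (fun z => norm_nonneg _))
      (fun p => ?_) (hsummul.mul_right Real.pi)
    have step1 : ∫ z in Set.Ioc (0:ℝ) Real.pi, ‖f p.1 z * f p.2 z‖
        ≤ ∫ _ in Set.Ioc (0:ℝ) Real.pi, |c p.1| * |c p.2| := by
      apply setIntegral_mono_on (hInt p).norm
        (integrableOn_const measure_Ioc_lt_top.ne) measurableSet_Ioc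
      intro z _; exact hbd p z
    have step2 : ∫ _ in Set.Ioc (0:ℝ) Real.pi, |c p.1| * |c p.2|
        = |c p.1| * |c p.2| * Real.pi := by
      rw [setIntegral_const, Measure.real, Real.volume_Ioc, ENNReal.toReal_ofReal (by linarith),
        sub_zero, smul_eq_mul, mul_comm]
    linarith [step1, step2.le, step2.ge]
  rw [← MeasureTheory.integral_tsum_of_summable_integral_norm hInt hIntSum]
  have hval : ∀ p : ℕ × ℕ, ∫ z in Set.Ioc (0:ℝ) Real.pi, f p.1 z * f p.2 z
      = c p.1 * c p.2 * (if p.1 = p.2 then Real.pi / 2 else 0) := by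
    intro p
    rw [← intervalIntegral.integral_of_le hπ]
    have h0 : ∀ z : ℝ, f p.1 z * f p.2 z
        = c p.1 * c p.2 * (Real.sin (((p.1:ℝ)+1) * z) * Real.sin (((p.2:ℝ)+1) * z)) := by
      intro z; simp only [hf]; ring
    simp_rw [h0]
    rw [intervalIntegral.integral_const_mul, orth p.1 p.2]
  simp_rw [hval]
  have hitebd : ∀ (a b : ℝ) (P : Prop) [Decidable P],
      ‖a * b * (if P then Real.pi / 2 else 0)‖ ≤ |a| * |b| * (Real.pi / 2) := by
    intro a b P _
    rw [norm_mul, norm_mul, Real.norm_eq_abs, Real.norm_eq_abs]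
    apply mul_le_mul_of_nonneg_left _ (by positivity)
    split
    · rw [Real.norm_eq_abs, abs_of_nonneg (by positivity)]
    · simpa using (by positivity : (0:ℝ) ≤ Real.pi / 2)
  have hsumm : Summable fun p : ℕ × ℕ =>
      c p.1 * c p.2 * (if p.1 = p.2 then Real.pi / 2 else 0) := by
    apply Summable.of_norm
    exact Summable.of_nonneg_of_le (fun p => norm_nonneg _)
      (fun p => hitebd _ _ _) (hsummul.mul_right (Real.pi/2))
  have hfib : ∀ b : ℕ, Summable fun k : ℕ =>
      c b * c k * (if b = k then Real.pi / 2 else 0) := by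
    intro b
    apply Summable.of_norm
    apply Summable.of_nonneg_of_le (fun k => norm_nonneg _)
      (fun k => hitebd _ _ _) (((hc.mul_left (|c b|)).mul_right (Real.pi/2)))
  rw [Summable.tsum_prod' hsumm hfib]
  have hdiag : ∀ j : ℕ, (∑' k : ℕ, c j * c k * (if j = k then Real.pi / 2 else 0))
      = Real.pi / 2 * (c j)^2 := by
    intro j
    rw [tsum_eq_single j (fun k hk => by rw [if_neg (Ne.symm hk), mul_zero])]
    rw [if_pos rfl, sq]; ring
  simp_rw [hdiag]
  rw [tsum_mul_left]

lemma exp_neg_le_rpow {β y : ℝ} (hβ0 : 0 < β) (hβ1 : β ≤ 1) (hy : 0 < y) :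
    Real.exp (-y) ≤ y ^ (-β) := by
  rcases le_or_gt 1 y with h | h
  · have h1 : Real.exp (-y) ≤ y⁻¹ := by
      rw [Real.exp_neg]
      apply inv_anti₀ hy
      linarith [Real.add_one_le_exp y]
    calc Real.exp (-y) ≤ y⁻¹ := h1
      _ = y ^ (-1 : ℝ) := (Real.rpow_neg_one y).symm
      _ ≤ y ^ (-β) := Real.rpow_le_rpow_of_exponent_le h (by linarith)
  · calc Real.exp (-y) ≤ 1 := Real.exp_le_one_iff.2 (by linarith)
      _ ≤ y ^ (-β) :=
        Real.one_le_rpow_of_pos_of_le_one_of_nonpos hy h.le (by linarith)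

lemma one_sub_exp_sq_le {γ w : ℝ} (hγ0 : 0 ≤ γ) (hγ2 : γ ≤ 2) (hw : 0 < w) :
    (1 - Real.exp (-w)) ^ 2 ≤ w ^ γ := by
  have hexp : 0 ≤ 1 - Real.exp (-w) := by
    have : Real.exp (-w) ≤ 1 := Real.exp_le_one_iff.2 (by linarith)
    linarith
  rcases le_or_gt 1 w with h | h
  · have h1 : (1 - Real.exp (-w)) ^ 2 ≤ 1 := by
      have : Real.exp (-w) ≥ 0 := (Real.exp_pos _).le
      nlinarith
    exact h1.trans (Real.one_le_rpow h (by linarith))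
  · have h1 : 1 - Real.exp (-w) ≤ w := by
      have := Real.add_one_le_exp (-w)
      linarith
    calc (1 - Real.exp (-w)) ^ 2 ≤ w ^ 2 := by nlinarith
      _ = w ^ (2 : ℝ) := by rw [← Real.rpow_natCast w 2]; norm_num
      _ ≤ w ^ γ := Real.rpow_le_rpow_of_exponent_ge hw h.le hγ2

lemma summable_rpow_shift {e : ℝ} (he : e < -1) :
    Summable fun j : ℕ => ((j:ℝ)+1) ^ e := by
  have h0 : Summable fun n : ℕ => (n:ℝ) ^ e := Real.summable_nat_rpow.2 he
  have h1 := (summable_nat_add_iff 1).2 h0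
  apply h1.congr
  intro j
  push_cast
  ring_nf

lemma summable_exp_quartic {u : ℝ} (hu : 0 < u) :
    Summable fun j : ℕ => Real.exp (-((j:ℝ)+1)^4 * u) := by
  have hgeo : Summable fun j : ℕ => Real.exp (-u) ^ j :=
    summable_geometric_of_lt_one (Real.exp_pos _).le (Real.exp_lt_one_iff.2 (by linarith))
  apply Summable.of_nonneg_of_le (fun j => (Real.exp_pos _).le) _ (hgeo.mul_left (Real.exp (-u)))
  intro j
  have h1 : Real.exp (-u) * Real.exp (-u) ^ j = Real.exp (((j:ℝ)+1) * (-u)) := by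
    rw [← Real.exp_nat_mul, ← Real.exp_add]
    ring_nf
  rw [h1]
  apply Real.exp_le_exp.2
  have hj1 : (1:ℝ) ≤ (j:ℝ) + 1 := by have := Nat.cast_nonneg (α := ℝ) j; linarith
  nlinarith [pow_le_pow_right₀ hj1 (by norm_num : 1 ≤ 4)]

lemma two_div_pi_nonneg : (0:ℝ) ≤ 2 / Real.pi := by positivity

lemma phi_abs_le (j : ℕ) (x : ℝ) : |phi j x| ≤ Real.sqrt (2 / Real.pi) := by
  rw [phi, abs_mul, abs_of_nonneg (Real.sqrt_nonneg _)]
  exact mul_le_of_le_one_right (Real.sqrt_nonneg _) (Real.abs_sin_le_one _)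

lemma phi_sq_le (j : ℕ) (x : ℝ) : (phi j x) ^ 2 ≤ 2 / Real.pi := by
  rw [phi, mul_pow, Real.sq_sqrt two_div_pi_nonneg]
  exact mul_le_of_le_one_right two_div_pi_nonneg (Real.sin_sq_le_one _)

lemma sqrt_two_div_pi_sq : Real.sqrt (2 / Real.pi) ^ 2 = 2 / Real.pi :=
  Real.sq_sqrt two_div_pi_nonneg

lemma G_repr (u x z : ℝ) :
    G u x z = ∑' j : ℕ,
      (Real.exp (-((j:ℝ)+1)^4 * u) * phi (j+1) x * Real.sqrt (2 / Real.pi))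
        * Real.sin (((j:ℝ)+1) * z) := by
  rw [G]
  apply tsum_congr
  intro j
  have : phi (j+1) z = Real.sqrt (2 / Real.pi) * Real.sin (((j:ℝ)+1) * z) := by
    rw [phi]; push_cast; ring_nf
  rw [this]; ring

lemma summable_G_coeff_abs {u x : ℝ} (hu : 0 < u) :
    Summable fun j : ℕ =>
      |Real.exp (-((j:ℝ)+1)^4 * u) * phi (j+1) x * Real.sqrt (2 / Real.pi)| := by
  apply Summable.of_nonneg_of_le (fun j => abs_nonneg _) _
    ((summable_exp_quartic hu).mul_right (2 / Real.pi))
  intro j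
  rw [abs_mul, abs_mul, abs_of_nonneg (Real.exp_pos _).le,
    abs_of_nonneg (Real.sqrt_nonneg _)]
  calc Real.exp (-((j:ℝ)+1)^4 * u) * |phi (j+1) x| * Real.sqrt (2 / Real.pi)
      ≤ Real.exp (-((j:ℝ)+1)^4 * u) * Real.sqrt (2 / Real.pi) * Real.sqrt (2 / Real.pi) := by
        gcongr
        exact phi_abs_le _ _
    _ = Real.exp (-((j:ℝ)+1)^4 * u) * (2 / Real.pi) := by
        rw [mul_assoc, ← sq, sqrt_two_div_pi_sq]

lemma summable_G_term {u x z : ℝ} (hu : 0 < u) :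
    Summable fun j : ℕ =>
      Real.exp (-((j:ℝ)+1)^4 * u) * phi (j+1) x * phi (j+1) z := by
  apply Summable.of_norm
  apply Summable.of_nonneg_of_le (fun j => norm_nonneg _) _
    ((summable_exp_quartic hu).mul_right (2 / Real.pi))
  intro j
  rw [Real.norm_eq_abs, abs_mul, abs_mul, abs_of_nonneg (Real.exp_pos _).le]
  calc Real.exp (-((j:ℝ)+1)^4 * u) * |phi (j+1) x| * |phi (j+1) z|
      ≤ Real.exp (-((j:ℝ)+1)^4 * u) * Real.sqrt (2 / Real.pi) * Real.sqrt (2 / Real.pi) := by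
        gcongr <;> [exact phi_abs_le _ _; exact phi_abs_le _ _]
    _ = Real.exp (-((j:ℝ)+1)^4 * u) * (2 / Real.pi) := by
        rw [mul_assoc, ← sq, sqrt_two_div_pi_sq]

lemma quartic_rpow (j : ℕ) (e : ℝ) :
    (((j:ℝ)+1)^4 : ℝ) ^ e = ((j:ℝ)+1) ^ (4 * e) := by
  have hj : (0:ℝ) ≤ (j:ℝ)+1 := by positivity
  rw [← Real.rpow_natCast ((j:ℝ)+1) 4, ← Real.rpow_mul hj]
  norm_num

lemma E_le_one {u : ℝ} (hu : 0 ≤ u) (j : ℕ) :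
    Real.exp (-((j:ℝ)+1)^4 * u) ≤ 1 := by
  apply Real.exp_le_one_iff.2
  have : (0:ℝ) ≤ ((j:ℝ)+1)^4 * u := by positivity
  linarith

lemma E_le_rpow {β u : ℝ} (hβ0 : 0 < β) (hβ1 : β ≤ 1) (hu : 0 < u) (j : ℕ) :
    Real.exp (-((j:ℝ)+1)^4 * u) ≤ ((j:ℝ)+1)^(-(4*β)) * u^(-β) := by
  have hK : (0:ℝ) < ((j:ℝ)+1)^4 := by positivity
  have hKu : (0:ℝ) < ((j:ℝ)+1)^4 * u := mul_pos hK hu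
  calc Real.exp (-((j:ℝ)+1)^4 * u) = Real.exp (-(((j:ℝ)+1)^4 * u)) := by rw [neg_mul]
    _ ≤ (((j:ℝ)+1)^4 * u)^(-β) := exp_neg_le_rpow hβ0 hβ1 hKu
    _ = (((j:ℝ)+1)^4)^(-β) * u^(-β) := Real.mul_rpow hK.le hu.le
    _ = ((j:ℝ)+1)^(-(4*β)) * u^(-β) := by rw [quartic_rpow, mul_neg]

set_option maxHeartbeats 1000000 in
lemma inner_sq_bound {β : ℝ} (hβ : 1/4 < β) (hβ1 : β ≤ 1) {u : ℝ} (hu : 0 < u) (x : ℝ) :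
    ∫ z in (0:ℝ)..Real.pi, |G u x z|^2
      ≤ (2/Real.pi) * (∑' j : ℕ, ((j:ℝ)+1)^(-(4*β))) * u^(-β) := by
  have hβ0 : 0 < β := lt_trans (by norm_num) hβ
  set c : ℕ → ℝ := fun j =>
    Real.exp (-((j:ℝ)+1)^4 * u) * phi (j+1) x * Real.sqrt (2 / Real.pi) with hc
  have hrepr : ∀ z : ℝ, G u x z = ∑' j : ℕ, c j * Real.sin (((j:ℝ)+1) * z) :=
    fun z => G_repr u x z
  simp only [sq_abs]
  simp_rw [hrepr]
  rw [parseval c (summable_G_coeff_abs hu)]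
  have hterm : ∀ j : ℕ, (c j)^2
      ≤ ((2/Real.pi)^2 * u^(-β)) * ((j:ℝ)+1)^(-(4*β)) := by
    intro j
    have h1 : (c j)^2 = Real.exp (-((j:ℝ)+1)^4 * u)^2 * ((phi (j+1) x)^2 * (2/Real.pi)) := by
      rw [hc, mul_pow, mul_pow, sqrt_two_div_pi_sq]; ring
    have h2 : (phi (j+1) x)^2 * (2/Real.pi) ≤ (2/Real.pi) * (2/Real.pi) :=
      mul_le_mul_of_nonneg_right (phi_sq_le _ _) two_div_pi_nonneg
    have h3 : Real.exp (-((j:ℝ)+1)^4 * u)^2 ≤ ((j:ℝ)+1)^(-(4*β)) * u^(-β) := by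
      have hE1 : Real.exp (-((j:ℝ)+1)^4 * u) ≤ 1 := E_le_one hu.le j
      have hEpos : 0 < Real.exp (-((j:ℝ)+1)^4 * u) := Real.exp_pos _
      calc Real.exp (-((j:ℝ)+1)^4 * u)^2 ≤ Real.exp (-((j:ℝ)+1)^4 * u) := by nlinarith
        _ ≤ ((j:ℝ)+1)^(-(4*β)) * u^(-β) := E_le_rpow hβ0 hβ1 hu j
    calc (c j)^2 = Real.exp (-((j:ℝ)+1)^4 * u)^2 * ((phi (j+1) x)^2 * (2/Real.pi)) := h1
      _ ≤ (((j:ℝ)+1)^(-(4*β)) * u^(-β)) * ((2/Real.pi) * (2/Real.pi)) := by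
          apply mul_le_mul h3 h2 (by positivity) (by positivity)
      _ = ((2/Real.pi)^2 * u^(-β)) * ((j:ℝ)+1)^(-(4*β)) := by ring
  have hsumL : Summable fun j : ℕ => (c j)^2 := by
    apply Summable.of_nonneg_of_le (fun j => sq_nonneg _) _
      ((summable_exp_quartic hu).mul_left ((2/Real.pi)^2))
    intro j
    have h1 : (c j)^2 = Real.exp (-((j:ℝ)+1)^4 * u)^2 * ((phi (j+1) x)^2 * (2/Real.pi)) := by
      rw [hc, mul_pow, mul_pow, sqrt_two_div_pi_sq]; ring
    have hE1 : Real.exp (-((j:ℝ)+1)^4 * u) ≤ 1 := E_le_one hu.le j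
    have hEpos : 0 < Real.exp (-((j:ℝ)+1)^4 * u) := Real.exp_pos _
    have h2 := phi_sq_le (j+1) x
    have h2' := sq_nonneg (phi (j+1) x)
    have h4 := two_div_pi_nonneg
    have hE2 : Real.exp (-((j:ℝ)+1)^4 * u)^2 ≤ Real.exp (-((j:ℝ)+1)^4 * u) := by nlinarith
    have h5 : (phi (j+1) x)^2 * (2/Real.pi) ≤ (2/Real.pi) * (2/Real.pi) :=
      mul_le_mul_of_nonneg_right h2 h4
    calc (c j)^2 = Real.exp (-((j:ℝ)+1)^4 * u)^2 * ((phi (j+1) x)^2 * (2/Real.pi)) := h1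
      _ ≤ Real.exp (-((j:ℝ)+1)^4 * u) * ((2/Real.pi) * (2/Real.pi)) :=
          mul_le_mul hE2 h5 (by positivity) (by positivity)
      _ = (2/Real.pi)^2 * Real.exp (-((j:ℝ)+1)^4 * u) := by ring
  have hsumR : Summable fun j : ℕ =>
      ((2/Real.pi)^2 * u^(-β)) * ((j:ℝ)+1)^(-(4*β)) :=
    (summable_rpow_shift (by linarith)).mul_left _
  calc Real.pi / 2 * ∑' j : ℕ, (c j)^2
      ≤ Real.pi / 2 * ∑' j : ℕ, ((2/Real.pi)^2 * u^(-β)) * ((j:ℝ)+1)^(-(4*β)) := by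
        apply mul_le_mul_of_nonneg_left (Summable.tsum_le_tsum hterm hsumL hsumR) (by positivity)
    _ = Real.pi / 2 * (((2/Real.pi)^2 * u^(-β)) * ∑' j : ℕ, ((j:ℝ)+1)^(-(4*β))) := by
        rw [tsum_mul_left]
    _ = (2/Real.pi) * (∑' j : ℕ, ((j:ℝ)+1)^(-(4*β))) * u^(-β) := by
        have hπ : Real.pi ≠ 0 := Real.pi_ne_zero
        field_simp

lemma summable_G_sin {u x : ℝ} (hu : 0 < u) (z : ℝ) :
    Summable fun j : ℕ =>
      (Real.exp (-((j:ℝ)+1)^4 * u) * phi (j+1) x * Real.sqrt (2 / Real.pi))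
        * Real.sin (((j:ℝ)+1) * z) := by
  apply Summable.of_norm
  apply Summable.of_nonneg_of_le (fun j => norm_nonneg _) _ (summable_G_coeff_abs hu (x := x))
  intro j
  rw [Real.norm_eq_abs, abs_mul]
  exact mul_le_of_le_one_right (abs_nonneg _) (Real.abs_sin_le_one _)

lemma G_diff_repr {a b : ℝ} (ha : 0 < a) (hb : 0 < b) (x z : ℝ) :
    G a x z - G b x z = ∑' j : ℕ,
      ((Real.exp (-((j:ℝ)+1)^4 * a) - Real.exp (-((j:ℝ)+1)^4 * b))
        * phi (j+1) x * Real.sqrt (2 / Real.pi)) * Real.sin (((j:ℝ)+1) * z) := by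
  rw [G_repr a x z, G_repr b x z, ← Summable.tsum_sub (summable_G_sin ha z) (summable_G_sin hb z)]
  apply tsum_congr
  intro j
  ring

lemma E_diff_abs_le {a b : ℝ} (hba : b ≤ a) (j : ℕ) :
    |Real.exp (-((j:ℝ)+1)^4 * a) - Real.exp (-((j:ℝ)+1)^4 * b)|
      ≤ Real.exp (-((j:ℝ)+1)^4 * b) := by
  have hK : (0:ℝ) ≤ ((j:ℝ)+1)^4 := by positivity
  have h1 : Real.exp (-((j:ℝ)+1)^4 * a) ≤ Real.exp (-((j:ℝ)+1)^4 * b) := by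
    apply Real.exp_le_exp.2
    nlinarith
  have h2 : 0 < Real.exp (-((j:ℝ)+1)^4 * a) := Real.exp_pos _
  rw [abs_of_nonpos (by linarith)]
  linarith

set_option maxHeartbeats 1000000 in
lemma inner_diff_bound {γ β' : ℝ} (hγ0 : 0 < γ) (hγ2 : γ ≤ 2) (hβ'0 : 0 < β')
    (hβ'1 : β' ≤ 1) (hexp : 4*γ - 4*β' < -1) {b δ : ℝ} (hb : 0 < b) (hδ : 0 < δ) (x : ℝ) :
    ∫ z in (0:ℝ)..Real.pi, |G (b+δ) x z - G b x z|^2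
      ≤ (2/Real.pi) * (∑' j : ℕ, ((j:ℝ)+1)^(4*γ-4*β')) * δ^γ * b^(-β') := by
  have hbδ : 0 < b + δ := by linarith
  set c : ℕ → ℝ := fun j =>
    (Real.exp (-((j:ℝ)+1)^4 * (b+δ)) - Real.exp (-((j:ℝ)+1)^4 * b))
      * phi (j+1) x * Real.sqrt (2 / Real.pi) with hc
  have hrepr : ∀ z : ℝ, G (b+δ) x z - G b x z
      = ∑' j : ℕ, c j * Real.sin (((j:ℝ)+1) * z) := fun z => G_diff_repr hbδ hb x z
  simp only [sq_abs]
  simp_rw [hrepr]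
  have hcabs : Summable fun j : ℕ => |c j| := by
    apply Summable.of_nonneg_of_le (fun j => abs_nonneg _) _
      ((summable_exp_quartic hb).mul_right (2 / Real.pi))
    intro j
    rw [hc]
    rw [abs_mul, abs_mul, abs_of_nonneg (Real.sqrt_nonneg _)]
    calc |Real.exp (-((j:ℝ)+1)^4 * (b+δ)) - Real.exp (-((j:ℝ)+1)^4 * b)|
          * |phi (j+1) x| * Real.sqrt (2 / Real.pi)
        ≤ Real.exp (-((j:ℝ)+1)^4 * b) * Real.sqrt (2 / Real.pi) * Real.sqrt (2 / Real.pi) := by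
          gcongr
          · exact E_diff_abs_le (by linarith) j
          · exact phi_abs_le _ _
      _ = Real.exp (-((j:ℝ)+1)^4 * b) * (2 / Real.pi) := by
          rw [mul_assoc, ← sq, sqrt_two_div_pi_sq]
  rw [parseval c hcabs]
  -- key pointwise bound on the squared coefficient
  have hterm : ∀ j : ℕ, (c j)^2
      ≤ ((2/Real.pi)^2 * δ^γ * b^(-β')) * ((j:ℝ)+1)^(4*γ-4*β') := by
    intro j
    have hK : (0:ℝ) < ((j:ℝ)+1)^4 := by positivity
    have hKδ : (0:ℝ) < ((j:ℝ)+1)^4 * δ := mul_pos hK hδ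
    have hEb : 0 < Real.exp (-((j:ℝ)+1)^4 * b) := Real.exp_pos _
    have hsplit : Real.exp (-((j:ℝ)+1)^4 * (b+δ))
        = Real.exp (-((j:ℝ)+1)^4 * b) * Real.exp (-(((j:ℝ)+1)^4 * δ)) := by
      rw [← Real.exp_add]; ring_nf
    have hdiffsq : (Real.exp (-((j:ℝ)+1)^4 * (b+δ)) - Real.exp (-((j:ℝ)+1)^4 * b))^2
        = Real.exp (-((j:ℝ)+1)^4 * b)^2 * (1 - Real.exp (-(((j:ℝ)+1)^4 * δ)))^2 := by
      rw [hsplit]; ring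
    have h1sub : (1 - Real.exp (-(((j:ℝ)+1)^4 * δ)))^2 ≤ (((j:ℝ)+1)^4 * δ)^γ :=
      one_sub_exp_sq_le hγ0.le hγ2 hKδ
    have hEb2 : Real.exp (-((j:ℝ)+1)^4 * b)^2 ≤ Real.exp (-((j:ℝ)+1)^4 * b) := by
      have := E_le_one hb.le j
      nlinarith
    have hEbrpow : Real.exp (-((j:ℝ)+1)^4 * b) ≤ ((j:ℝ)+1)^(-(4*β')) * b^(-β') :=
      E_le_rpow hβ'0 hβ'1 hb j
    have hKγ : (((j:ℝ)+1)^4 * δ)^γ = ((j:ℝ)+1)^(4*γ) * δ^γ := by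
      rw [Real.mul_rpow hK.le hδ.le, quartic_rpow]
    have hcsq : (c j)^2
        = (Real.exp (-((j:ℝ)+1)^4 * (b+δ)) - Real.exp (-((j:ℝ)+1)^4 * b))^2
          * ((phi (j+1) x)^2 * (2/Real.pi)) := by
      rw [hc, mul_pow, mul_pow, sqrt_two_div_pi_sq]; ring
    have hphi : (phi (j+1) x)^2 * (2/Real.pi) ≤ (2/Real.pi) * (2/Real.pi) :=
      mul_le_mul_of_nonneg_right (phi_sq_le _ _) two_div_pi_nonneg
    have hstep : (Real.exp (-((j:ℝ)+1)^4 * (b+δ)) - Real.exp (-((j:ℝ)+1)^4 * b))^2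
        ≤ (((j:ℝ)+1)^(-(4*β')) * b^(-β')) * (((j:ℝ)+1)^(4*γ) * δ^γ) := by
      rw [hdiffsq, ← hKγ]
      calc Real.exp (-((j:ℝ)+1)^4 * b)^2 * (1 - Real.exp (-(((j:ℝ)+1)^4 * δ)))^2
          ≤ Real.exp (-((j:ℝ)+1)^4 * b) * (((j:ℝ)+1)^4 * δ)^γ := by
            apply mul_le_mul hEb2 h1sub (sq_nonneg _) hEb.le
        _ ≤ (((j:ℝ)+1)^(-(4*β')) * b^(-β')) * (((j:ℝ)+1)^4 * δ)^γ := by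
            apply mul_le_mul_of_nonneg_right hEbrpow (Real.rpow_nonneg (by positivity) _)
    have hcomb : ((j:ℝ)+1)^(-(4*β')) * ((j:ℝ)+1)^(4*γ) = ((j:ℝ)+1)^(4*γ-4*β') := by
      rw [← Real.rpow_add (by positivity)]
      ring_nf
    calc (c j)^2
        = (Real.exp (-((j:ℝ)+1)^4 * (b+δ)) - Real.exp (-((j:ℝ)+1)^4 * b))^2
          * ((phi (j+1) x)^2 * (2/Real.pi)) := hcsq
      _ ≤ ((((j:ℝ)+1)^(-(4*β')) * b^(-β')) * (((j:ℝ)+1)^(4*γ) * δ^γ))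
          * ((2/Real.pi) * (2/Real.pi)) :=
          mul_le_mul hstep hphi (by positivity) (by positivity)
      _ = ((2/Real.pi) * (2/Real.pi) * δ^γ * b^(-β'))
          * (((j:ℝ)+1)^(-(4*β')) * ((j:ℝ)+1)^(4*γ)) := by ring
      _ = ((2/Real.pi)^2 * δ^γ * b^(-β')) * ((j:ℝ)+1)^(4*γ-4*β') := by
          rw [hcomb]; ring
  have hsumL : Summable fun j : ℕ => (c j)^2 := by
    apply Summable.of_nonneg_of_le (fun j => sq_nonneg _) _
      ((summable_exp_quartic hb).mul_left ((2/Real.pi)^2))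
    intro j
    have hEb : 0 < Real.exp (-((j:ℝ)+1)^4 * b) := Real.exp_pos _
    have hE1 : Real.exp (-((j:ℝ)+1)^4 * b) ≤ 1 := E_le_one hb.le j
    have hdle := E_diff_abs_le (show b ≤ b + δ by linarith) j
    have hdsq : (Real.exp (-((j:ℝ)+1)^4 * (b+δ)) - Real.exp (-((j:ℝ)+1)^4 * b))^2
        ≤ Real.exp (-((j:ℝ)+1)^4 * b) := by
      rw [← sq_abs]
      nlinarith [abs_nonneg (Real.exp (-((j:ℝ)+1)^4 * (b+δ)) - Real.exp (-((j:ℝ)+1)^4 * b))]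
    have hcsq : (c j)^2
        = (Real.exp (-((j:ℝ)+1)^4 * (b+δ)) - Real.exp (-((j:ℝ)+1)^4 * b))^2
          * ((phi (j+1) x)^2 * (2/Real.pi)) := by
      rw [hc, mul_pow, mul_pow, sqrt_two_div_pi_sq]; ring
    have hphi : (phi (j+1) x)^2 * (2/Real.pi) ≤ (2/Real.pi) * (2/Real.pi) :=
      mul_le_mul_of_nonneg_right (phi_sq_le _ _) two_div_pi_nonneg
    calc (c j)^2
        = (Real.exp (-((j:ℝ)+1)^4 * (b+δ)) - Real.exp (-((j:ℝ)+1)^4 * b))^2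
          * ((phi (j+1) x)^2 * (2/Real.pi)) := hcsq
      _ ≤ Real.exp (-((j:ℝ)+1)^4 * b) * ((2/Real.pi) * (2/Real.pi)) :=
          mul_le_mul hdsq hphi (by positivity) hEb.le
      _ = (2/Real.pi)^2 * Real.exp (-((j:ℝ)+1)^4 * b) := by ring
  have hsumR : Summable fun j : ℕ =>
      ((2/Real.pi)^2 * δ^γ * b^(-β')) * ((j:ℝ)+1)^(4*γ-4*β') :=
    (summable_rpow_shift hexp).mul_left _
  calc Real.pi / 2 * ∑' j : ℕ, (c j)^2
      ≤ Real.pi / 2 * ∑' j : ℕ, ((2/Real.pi)^2 * δ^γ * b^(-β')) * ((j:ℝ)+1)^(4*γ-4*β') :=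
        mul_le_mul_of_nonneg_left (Summable.tsum_le_tsum hterm hsumL hsumR) (by positivity)
    _ = Real.pi / 2 * (((2/Real.pi)^2 * δ^γ * b^(-β')) * ∑' j : ℕ, ((j:ℝ)+1)^(4*γ-4*β')) := by
        rw [tsum_mul_left]
    _ = (2/Real.pi) * (∑' j : ℕ, ((j:ℝ)+1)^(4*γ-4*β')) * δ^γ * b^(-β') := by
        have hπ : Real.pi ≠ 0 := Real.pi_ne_zero
        field_simp

lemma intervalIntegrable_sub_rpow (a c : ℝ) {β : ℝ} (hβ1 : β < 1) :
    IntervalIntegrable (fun r => (c - r) ^ (-β)) volume a c := by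
  have h := (intervalIntegrable_rpow' (show (-1:ℝ) < -β by linarith)
    (a := c - a) (b := c - c)).comp_sub_left c
  simpa using h

lemma integral_sub_rpow (a c : ℝ) {β : ℝ} (hβ1 : β < 1) :
    ∫ r in a..c, (c - r) ^ (-β) = (c - a) ^ (1-β) / (1-β) := by
  rw [intervalIntegral.integral_comp_sub_left (fun u => u ^ (-β)) c]
  rw [integral_rpow (Or.inl (by linarith))]
  rw [sub_self, Real.zero_rpow (by intro h; linarith : -β + 1 ≠ 0)]
  rw [show -β + 1 = 1 - β by ring, sub_zero]

lemma outer_le {a c : ℝ} (hac : a ≤ c) (F g : ℝ → ℝ)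
    (hgint : IntegrableOn g (Set.Ioo a c) volume)
    (hg0 : ∀ r ∈ Set.Ioo a c, 0 ≤ g r)
    (hFg : ∀ r ∈ Set.Ioo a c, F r ≤ g r) :
    ∫ r in a..c, F r ≤ ∫ r in Set.Ioo a c, g r := by
  rw [intervalIntegral.integral_of_le hac, integral_Ioc_eq_integral_Ioo]
  by_cases hF : IntegrableOn F (Set.Ioo a c) volume
  · exact setIntegral_mono_on hF hgint measurableSet_Ioo hFg
  · rw [MeasureTheory.integral_undef hF]
    exact setIntegral_nonneg measurableSet_Ioo hg0

set_option maxHeartbeats 1000000 in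
/-- For every `α ∈ (0,1)` there is `C = C(α,T) > 0` such that for all `x ∈ [0,π]`,
`0 ≤ s < t ≤ T`:
`∫_0^s ∫_0^π |G_{t−r}(x,z) − G_{s−r}(x,z)|² dz dr + ∫_s^t ∫_0^π |G_{t−r}(x,z)|² dz dr
 ≤ C|t−s|^{(3/4)α}`. -/
theorem stmt4 (T : ℝ) (hT : 0 < T) (α : ℝ) (hα : α ∈ Set.Ioo (0 : ℝ) 1) :
    ∃ C : ℝ, 0 < C ∧ ∀ x ∈ Set.Icc (0 : ℝ) Real.pi, ∀ s t : ℝ, 0 ≤ s → s < t → t ≤ T →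
      (∫ r in (0 : ℝ)..s, ∫ z in (0 : ℝ)..Real.pi,
          |G (t - r) x z - G (s - r) x z| ^ 2)
        + (∫ r in s..t, ∫ z in (0 : ℝ)..Real.pi, |G (t - r) x z| ^ 2)
      ≤ C * |t - s| ^ ((3 / 4) * α) := by
  obtain ⟨hα0, hα1⟩ := hα
  have hπ := Real.pi_pos
  have hγ0 : (0:ℝ) < 3 / 4 * α := by linarith
  have hγ2 : (3:ℝ) / 4 * α ≤ 2 := by linarith
  have hβq : (1:ℝ)/4 < 1 - 3 / 4 * α := by linarith
  have hβ1 : (1:ℝ) - 3 / 4 * α ≤ 1 := by linarith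
  have hβlt1 : (1:ℝ) - 3 / 4 * α < 1 := by linarith
  have hβ'0 : (0:ℝ) < (3 / 4 * α)/2 + 5/8 := by linarith
  have hβ'1 : ((3:ℝ) / 4 * α)/2 + 5/8 ≤ 1 := by linarith
  have hβ'lt1 : ((3:ℝ) / 4 * α)/2 + 5/8 < 1 := by linarith
  have hexp : 4*(3 / 4 * α) - 4*((3 / 4 * α)/2 + 5/8) < -1 := by linarith
  have h1β' : (0:ℝ) < 1 - ((3 / 4 * α)/2 + 5/8) := by linarith
  have hS1n : 0 ≤ ∑' j : ℕ, ((j:ℝ)+1)^(-(4*(1 - 3 / 4 * α))) :=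
    tsum_nonneg (fun j => Real.rpow_nonneg (by positivity) _)
  have hS2n : 0 ≤ ∑' j : ℕ, ((j:ℝ)+1)^(4*(3 / 4 * α)-4*((3 / 4 * α)/2 + 5/8)) :=
    tsum_nonneg (fun j => Real.rpow_nonneg (by positivity) _)
  have hA1 : 0 ≤ (2/Real.pi) * (∑' j : ℕ, ((j:ℝ)+1)^(4*(3 / 4 * α)-4*((3 / 4 * α)/2 + 5/8)))
      * (T^(1-((3 / 4 * α)/2 + 5/8)) / (1-((3 / 4 * α)/2 + 5/8))) :=
    mul_nonneg (mul_nonneg (by positivity) hS2n)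
      (div_nonneg (Real.rpow_nonneg hT.le _) h1β'.le)
  have hA2 : 0 ≤ (2/Real.pi) * (∑' j : ℕ, ((j:ℝ)+1)^(-(4*(1 - 3 / 4 * α)))) / (3 / 4 * α) :=
    div_nonneg (mul_nonneg (by positivity) hS1n) hγ0.le
  refine ⟨(2/Real.pi) * (∑' j : ℕ, ((j:ℝ)+1)^(4*(3 / 4 * α)-4*((3 / 4 * α)/2 + 5/8)))
      * (T^(1-((3 / 4 * α)/2 + 5/8)) / (1-((3 / 4 * α)/2 + 5/8)))
    + (2/Real.pi) * (∑' j : ℕ, ((j:ℝ)+1)^(-(4*(1 - 3 / 4 * α)))) / (3 / 4 * α) + 1,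
    by linarith, ?_⟩
  intro x hx s t hs hst htT
  have hδ : 0 < t - s := by linarith
  have habs : |t - s| = t - s := abs_of_pos hδ
  rw [habs]
  have hpow : 0 ≤ (t - s)^(3 / 4 * α) := Real.rpow_nonneg hδ.le _
  -- Term 2
  have hterm2 : (∫ r in s..t, ∫ z in (0:ℝ)..Real.pi, |G (t - r) x z| ^ 2)
      ≤ ((2/Real.pi) * (∑' j : ℕ, ((j:ℝ)+1)^(-(4*(1 - 3 / 4 * α)))) / (3 / 4 * α))
        * (t - s)^(3 / 4 * α) := by
    have hgint : IntegrableOn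
        (fun r => (2/Real.pi) * (∑' j : ℕ, ((j:ℝ)+1)^(-(4*(1 - 3 / 4 * α))))
          * (t - r)^(-(1 - 3 / 4 * α))) (Set.Ioo s t) volume := by
      apply IntegrableOn.mono_set _ Set.Ioo_subset_Ioc_self
      rw [← intervalIntegrable_iff_integrableOn_Ioc_of_le hst.le]
      exact (intervalIntegrable_sub_rpow s t hβlt1).const_mul _
    have hIoo := outer_le hst.le
      (fun r => ∫ z in (0:ℝ)..Real.pi, |G (t - r) x z| ^ 2)
      (fun r => (2/Real.pi) * (∑' j : ℕ, ((j:ℝ)+1)^(-(4*(1 - 3 / 4 * α))))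
        * (t - r)^(-(1 - 3 / 4 * α)))
      hgint
      (fun r hr => mul_nonneg (mul_nonneg (by positivity) hS1n)
        (Real.rpow_nonneg (by linarith [hr.2]) _))
      (fun r hr => inner_sq_bound hβq hβ1 (by obtain ⟨h1, h2⟩ := hr; linarith) x)
    calc (∫ r in s..t, ∫ z in (0:ℝ)..Real.pi, |G (t - r) x z| ^ 2)
        ≤ ∫ r in Set.Ioo s t, (2/Real.pi) * (∑' j : ℕ, ((j:ℝ)+1)^(-(4*(1 - 3 / 4 * α))))
            * (t - r)^(-(1 - 3 / 4 * α)) := hIoo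
      _ = ∫ r in s..t, (2/Real.pi) * (∑' j : ℕ, ((j:ℝ)+1)^(-(4*(1 - 3 / 4 * α))))
            * (t - r)^(-(1 - 3 / 4 * α)) := by
          rw [intervalIntegral.integral_of_le hst.le, integral_Ioc_eq_integral_Ioo]
      _ = (2/Real.pi) * (∑' j : ℕ, ((j:ℝ)+1)^(-(4*(1 - 3 / 4 * α))))
            * ((t - s)^(1-(1 - 3 / 4 * α))/(1-(1 - 3 / 4 * α))) := by
          rw [intervalIntegral.integral_const_mul, integral_sub_rpow s t hβlt1]
      _ = ((2/Real.pi) * (∑' j : ℕ, ((j:ℝ)+1)^(-(4*(1 - 3 / 4 * α)))) / (3 / 4 * α))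
            * (t - s)^(3 / 4 * α) := by
          rw [show (1:ℝ)-(1 - 3 / 4 * α) = 3 / 4 * α by ring]
          ring
  -- Term 1
  have hterm1 : (∫ r in (0:ℝ)..s, ∫ z in (0:ℝ)..Real.pi,
        |G (t - r) x z - G (s - r) x z| ^ 2)
      ≤ ((2/Real.pi) * (∑' j : ℕ, ((j:ℝ)+1)^(4*(3 / 4 * α)-4*((3 / 4 * α)/2 + 5/8)))
          * (T^(1-((3 / 4 * α)/2 + 5/8)) / (1-((3 / 4 * α)/2 + 5/8))))
        * (t - s)^(3 / 4 * α) := by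
    have hgint : IntegrableOn
        (fun r => (2/Real.pi) * (∑' j : ℕ, ((j:ℝ)+1)^(4*(3 / 4 * α)-4*((3 / 4 * α)/2 + 5/8)))
          * (t - s)^(3 / 4 * α) * (s - r)^(-((3 / 4 * α)/2 + 5/8))) (Set.Ioo 0 s) volume := by
      apply IntegrableOn.mono_set _ Set.Ioo_subset_Ioc_self
      rw [← intervalIntegrable_iff_integrableOn_Ioc_of_le hs]
      exact (intervalIntegrable_sub_rpow 0 s hβ'lt1).const_mul _
    have hFg : ∀ r ∈ Set.Ioo (0:ℝ) s,
        (∫ z in (0:ℝ)..Real.pi, |G (t - r) x z - G (s - r) x z| ^ 2)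
          ≤ (2/Real.pi) * (∑' j : ℕ, ((j:ℝ)+1)^(4*(3 / 4 * α)-4*((3 / 4 * α)/2 + 5/8)))
            * (t - s)^(3 / 4 * α) * (s - r)^(-((3 / 4 * α)/2 + 5/8)) := by
      intro r hr
      have hb : 0 < s - r := by obtain ⟨h1, h2⟩ := hr; linarith
      have hrw : t - r = (s - r) + (t - s) := by ring
      have := inner_diff_bound hγ0 hγ2 hβ'0 hβ'1 hexp hb hδ x
      rw [← hrw] at this
      exact this
    have hIoo := outer_le hs
      (fun r => ∫ z in (0:ℝ)..Real.pi, |G (t - r) x z - G (s - r) x z| ^ 2)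
      (fun r => (2/Real.pi) * (∑' j : ℕ, ((j:ℝ)+1)^(4*(3 / 4 * α)-4*((3 / 4 * α)/2 + 5/8)))
        * (t - s)^(3 / 4 * α) * (s - r)^(-((3 / 4 * α)/2 + 5/8)))
      hgint
      (fun r hr => mul_nonneg (mul_nonneg (mul_nonneg (by positivity) hS2n) hpow)
        (Real.rpow_nonneg (by linarith [hr.2]) _))
      hFg
    calc (∫ r in (0:ℝ)..s, ∫ z in (0:ℝ)..Real.pi, |G (t - r) x z - G (s - r) x z| ^ 2)
        ≤ ∫ r in Set.Ioo (0:ℝ) s,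
            (2/Real.pi) * (∑' j : ℕ, ((j:ℝ)+1)^(4*(3 / 4 * α)-4*((3 / 4 * α)/2 + 5/8)))
              * (t - s)^(3 / 4 * α) * (s - r)^(-((3 / 4 * α)/2 + 5/8)) := hIoo
      _ = ∫ r in (0:ℝ)..s,
            (2/Real.pi) * (∑' j : ℕ, ((j:ℝ)+1)^(4*(3 / 4 * α)-4*((3 / 4 * α)/2 + 5/8)))
              * (t - s)^(3 / 4 * α) * (s - r)^(-((3 / 4 * α)/2 + 5/8)) := by
          rw [intervalIntegral.integral_of_le hs, integral_Ioc_eq_integral_Ioo]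
      _ = (2/Real.pi) * (∑' j : ℕ, ((j:ℝ)+1)^(4*(3 / 4 * α)-4*((3 / 4 * α)/2 + 5/8)))
              * (t - s)^(3 / 4 * α)
            * ((s - 0)^(1-((3 / 4 * α)/2 + 5/8))/(1-((3 / 4 * α)/2 + 5/8))) := by
          rw [intervalIntegral.integral_const_mul, integral_sub_rpow 0 s hβ'lt1]
      _ ≤ (2/Real.pi) * (∑' j : ℕ, ((j:ℝ)+1)^(4*(3 / 4 * α)-4*((3 / 4 * α)/2 + 5/8)))
              * (t - s)^(3 / 4 * α)
            * (T^(1-((3 / 4 * α)/2 + 5/8))/(1-((3 / 4 * α)/2 + 5/8))) := by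
          apply mul_le_mul_of_nonneg_left _ (mul_nonneg (mul_nonneg (by positivity) hS2n) hpow)
          have hs' : (s - 0:ℝ)^(1-((3 / 4 * α)/2 + 5/8)) ≤ T^(1-((3 / 4 * α)/2 + 5/8)) :=
            Real.rpow_le_rpow (by linarith) (by linarith) (by linarith)
          exact (div_le_div_iff_of_pos_right h1β').2 hs'
      _ = ((2/Real.pi) * (∑' j : ℕ, ((j:ℝ)+1)^(4*(3 / 4 * α)-4*((3 / 4 * α)/2 + 5/8)))
            * (T^(1-((3 / 4 * α)/2 + 5/8)) / (1-((3 / 4 * α)/2 + 5/8))))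
          * (t - s)^(3 / 4 * α) := by ring
  calc (∫ r in (0:ℝ)..s, ∫ z in (0:ℝ)..Real.pi, |G (t - r) x z - G (s - r) x z| ^ 2)
        + (∫ r in s..t, ∫ z in (0:ℝ)..Real.pi, |G (t - r) x z| ^ 2)
      ≤ ((2/Real.pi) * (∑' j : ℕ, ((j:ℝ)+1)^(4*(3 / 4 * α)-4*((3 / 4 * α)/2 + 5/8)))
            * (T^(1-((3 / 4 * α)/2 + 5/8)) / (1-((3 / 4 * α)/2 + 5/8)))
          + (2/Real.pi) * (∑' j : ℕ, ((j:ℝ)+1)^(-(4*(1 - 3 / 4 * α)))) / (3 / 4 * α))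
          * (t - s)^(3 / 4 * α) := by
        rw [add_mul]
        exact add_le_add hterm1 hterm2
    _ ≤ ((2/Real.pi) * (∑' j : ℕ, ((j:ℝ)+1)^(4*(3 / 4 * α)-4*((3 / 4 * α)/2 + 5/8)))
            * (T^(1-((3 / 4 * α)/2 + 5/8)) / (1-((3 / 4 * α)/2 + 5/8)))
          + (2/Real.pi) * (∑' j : ℕ, ((j:ℝ)+1)^(-(4*(1 - 3 / 4 * α)))) / (3 / 4 * α) + 1)
          * (t - s)^(3 / 4 * α) := by
        apply mul_le_mul_of_nonneg_right (by linarith) hpow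
end

section
/- For every ε ∈ (0,1) there exists a constant C_ε > 0 (depending only on ε and T, not on n) such that for every integer n ≥ 2, every t ∈ (0,T], and all x, y ∈ [0,π], |G^n_t(x,y)| ≤ C_ε t^{−1/4−ε} and |Δ_n G^n_t(x,y)| ≤ C_ε t^{−3/4−ε}. -/
/-- `λ_{j,n} = −j²·c_{j,n}` with `c_{j,n} = sin²(jπ/(2n))/(jπ/(2n))²`. -/
noncomputable def lam (n j : ℕ) : ℝ :=
  -((j : ℝ) ^ 2) * (Real.sin ((j : ℝ) * Real.pi / (2 * n)) ^ 2
    / ((j : ℝ) * Real.pi / (2 * n)) ^ 2)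

/-- `κ_n(y) = h⌊y/h⌋` with `h = π/n`. -/
noncomputable def kappa (n : ℕ) (y : ℝ) : ℝ :=
  (Real.pi / n) * (⌊y / (Real.pi / n)⌋ : ℝ)

/-- Piecewise linear interpolant of `φ_j` on the grid `{kπ/n}`. -/
noncomputable def phiI (n j : ℕ) (x : ℝ) : ℝ :=
  phi j (kappa n x) + ((n : ℝ) * x / Real.pi - (⌊x / (Real.pi / n)⌋ : ℝ))
    * (phi j (kappa n x + Real.pi / n) - phi j (kappa n x))

/-- Discrete Green function `G^n_t(x,y) = Σ_{j=1}^{n−1} e^{−λ_{j,n}²t} φ_{j,n}(x) φ_j(κ_n(y))`. -/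
noncomputable def Gn (n : ℕ) (t x y : ℝ) : ℝ :=
  ∑ j ∈ Finset.Icc 1 (n - 1),
    Real.exp (-(lam n j) ^ 2 * t) * phiI n j x * phi j (kappa n y)

/-- `Δ_n G^n_t(x,y) = Σ_{j=1}^{n−1} λ_{j,n} e^{−λ_{j,n}²t} φ_{j,n}(x) φ_j(κ_n(y))`. -/
noncomputable def DGn (n : ℕ) (t x y : ℝ) : ℝ :=
  ∑ j ∈ Finset.Icc 1 (n - 1),
    lam n j * Real.exp (-(lam n j) ^ 2 * t) * phiI n j x * phi j (kappa n y)

/- ### Auxiliary lemmas -/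

lemma exp_neg_le_rpow_s10 {u p : ℝ} (hu : 0 < u) (hp0 : 0 ≤ p) (hp2 : p ≤ 2) :
    Real.exp (-u) ≤ 4 * u ^ (-p) := by
  rcases le_or_gt u 1 with h | h
  · have h1 : Real.exp (-u) ≤ 1 := by
      rw [Real.exp_le_one_iff]; linarith
    have h2 : (1 : ℝ) ≤ u ^ (-p) :=
      Real.one_le_rpow_of_pos_of_le_one_of_nonpos hu h (by linarith)
    nlinarith [Real.rpow_pos_of_pos hu (-p)]
  · have hsq : Real.exp (u / 2) ^ 2 = Real.exp u := by
      rw [← Real.exp_nat_mul]; congr 1; push_cast; ring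
    have he : Real.exp (u / 2) ≥ u / 2 + 1 := by
      have := Real.add_one_le_exp (u / 2); linarith
    have hu2 : u ^ 2 / 4 ≤ Real.exp u := by
      rw [← hsq]; nlinarith [Real.exp_pos (u / 2)]
    have h2 : u ^ (-(2 : ℝ)) = (u ^ 2)⁻¹ := by
      rw [Real.rpow_neg hu.le, show (2 : ℝ) = ((2 : ℕ) : ℝ) by norm_num,
        Real.rpow_natCast]
    have hup : u ^ (-(2 : ℝ)) ≤ u ^ (-p) :=
      Real.rpow_le_rpow_of_exponent_le h.le (by linarith)
    have hmain : Real.exp (-u) ≤ 4 * u ^ (-(2 : ℝ)) := by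
      rw [Real.exp_neg, h2]
      have hexp : 0 < u ^ 2 / 4 := by positivity
      have := (inv_anti₀ hexp hu2)
      calc (Real.exp u)⁻¹ ≤ (u ^ 2 / 4)⁻¹ := this
        _ = 4 * (u ^ 2)⁻¹ := by rw [inv_div]; ring
    calc Real.exp (-u) ≤ 4 * u ^ (-(2 : ℝ)) := hmain
      _ ≤ 4 * u ^ (-p) := by linarith

lemma abs_phi_le (j : ℕ) (z : ℝ) : |phi j z| ≤ Real.sqrt (2 / Real.pi) := by
  rw [phi, abs_mul, abs_of_nonneg (Real.sqrt_nonneg _)]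
  calc Real.sqrt (2 / Real.pi) * |Real.sin ((j : ℝ) * z)|
      ≤ Real.sqrt (2 / Real.pi) * 1 :=
        mul_le_mul_of_nonneg_left (Real.abs_sin_le_one _) (Real.sqrt_nonneg _)
    _ = Real.sqrt (2 / Real.pi) := mul_one _

lemma abs_phiI_le (n j : ℕ) (hn : 0 < n) (x : ℝ) :
    |phiI n j x| ≤ Real.sqrt (2 / Real.pi) := by
  have hpi := Real.pi_pos
  have hn0 : (0 : ℝ) < n := by exact_mod_cast hn
  set θ : ℝ := (n : ℝ) * x / Real.pi - (⌊x / (Real.pi / n)⌋ : ℝ) with hθdef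
  have hnx : (n : ℝ) * x / Real.pi = x / (Real.pi / n) := by
    field_simp
  have hθ0 : 0 ≤ θ := by
    rw [hθdef, hnx]; exact sub_nonneg.2 (Int.floor_le _)
  have hθ1 : θ ≤ 1 := by
    rw [hθdef, hnx]
    have := Int.lt_floor_add_one (x / (Real.pi / n))
    linarith
  have hform : phiI n j x
      = (1 - θ) * phi j (kappa n x) + θ * phi j (kappa n x + Real.pi / n) := by
    rw [phiI]; ring
  have h1 := abs_phi_le j (kappa n x)
  have h2 := abs_phi_le j (kappa n x + Real.pi / n)
  rw [hform]
  calc |(1 - θ) * phi j (kappa n x) + θ * phi j (kappa n x + Real.pi / n)|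
      ≤ |(1 - θ) * phi j (kappa n x)| + |θ * phi j (kappa n x + Real.pi / n)| :=
        abs_add_le _ _
    _ = (1 - θ) * |phi j (kappa n x)| + θ * |phi j (kappa n x + Real.pi / n)| := by
        rw [abs_mul, abs_mul, abs_of_nonneg (by linarith : (0:ℝ) ≤ 1 - θ),
          abs_of_nonneg hθ0]
    _ ≤ (1 - θ) * Real.sqrt (2 / Real.pi) + θ * Real.sqrt (2 / Real.pi) :=
        add_le_add (mul_le_mul_of_nonneg_left h1 (by linarith))
          (mul_le_mul_of_nonneg_left h2 hθ0)
    _ = Real.sqrt (2 / Real.pi) := by ring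

lemma lam_bounds (n j : ℕ) (hn : 2 ≤ n) (hj1 : 1 ≤ j) (hjn : j ≤ n - 1) :
    4 / Real.pi ^ 2 * (j : ℝ) ^ 2 ≤ -lam n j ∧ -lam n j ≤ (j : ℝ) ^ 2 := by
  have hpi := Real.pi_pos
  have hn0 : (0 : ℝ) < n := by positivity
  have hj0 : (0 : ℝ) < j := by exact_mod_cast hj1
  set u : ℝ := (j : ℝ) * Real.pi / (2 * n) with hudef
  have hu0 : 0 < u := by positivity
  have hjln : (j : ℝ) ≤ n := by
    exact_mod_cast le_trans hjn (Nat.sub_le n 1)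
  have hun : u ≤ Real.pi / 2 := by
    rw [hudef, div_le_div_iff₀ (by positivity) (by norm_num)]
    nlinarith
  have hs1 : Real.sin u ≤ u := Real.sin_le hu0.le
  have hs2 : 2 / Real.pi * u ≤ Real.sin u := Real.mul_le_sin hu0.le hun
  have hspos : 0 < Real.sin u := lt_of_lt_of_le (by positivity) hs2
  have hu2 : (0 : ℝ) < u ^ 2 := by positivity
  have hlam : -lam n j = (j : ℝ) ^ 2 * (Real.sin u ^ 2 / u ^ 2) := by
    rw [lam]; ring
  constructor
  · rw [hlam]
    have hc : 4 / Real.pi ^ 2 ≤ Real.sin u ^ 2 / u ^ 2 := by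
      rw [le_div_iff₀ hu2]
      have e : 4 / Real.pi ^ 2 * u ^ 2 = (2 / Real.pi * u) ^ 2 := by ring
      rw [e]
      exact pow_le_pow_left₀ (by positivity) hs2 2
    nlinarith [sq_nonneg ((j : ℝ))]
  · rw [hlam]
    have hc : Real.sin u ^ 2 / u ^ 2 ≤ 1 := by
      rw [div_le_one hu2]
      exact pow_le_pow_left₀ hspos.le hs1 2
    nlinarith [sq_nonneg ((j : ℝ))]

lemma exp_term_bound (n j : ℕ) (hn : 2 ≤ n) (hj1 : 1 ≤ j) (hjn : j ≤ n - 1)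
    {t : ℝ} (ht : 0 < t) {p : ℝ} (hp0 : 0 ≤ p) (hp2 : p ≤ 2) :
    Real.exp (-(lam n j) ^ 2 * t)
      ≤ 4 * (16 / Real.pi ^ 4) ^ (-p) * (j : ℝ) ^ (-(4 * p)) * t ^ (-p) := by
  have hpi := Real.pi_pos
  have hj0 : (0 : ℝ) < j := by exact_mod_cast hj1
  obtain ⟨hl, _⟩ := lam_bounds n j hn hj1 hjn
  have hA : (0 : ℝ) < 16 / Real.pi ^ 4 := by positivity
  set u : ℝ := 16 / Real.pi ^ 4 * (j : ℝ) ^ 4 * t with hudef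
  have hu0 : 0 < u := by positivity
  have hlamsq : 16 / Real.pi ^ 4 * (j : ℝ) ^ 4 ≤ (lam n j) ^ 2 := by
    have h0 : (0 : ℝ) ≤ 4 / Real.pi ^ 2 * (j : ℝ) ^ 2 := by positivity
    have h1 : (4 / Real.pi ^ 2 * (j : ℝ) ^ 2) ^ 2 ≤ (-lam n j) ^ 2 :=
      pow_le_pow_left₀ h0 hl 2
    have h2 : (-lam n j) ^ 2 = (lam n j) ^ 2 := neg_sq _
    have h3 : (4 / Real.pi ^ 2 * (j : ℝ) ^ 2) ^ 2 = 16 / Real.pi ^ 4 * (j : ℝ) ^ 4 := by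
      ring
    rw [h2] at h1; linarith
  have hmono : Real.exp (-(lam n j) ^ 2 * t) ≤ Real.exp (-u) := by
    apply Real.exp_le_exp.2
    have := mul_le_mul_of_nonneg_right hlamsq ht.le
    rw [hudef]; linarith
  have hexp : Real.exp (-u) ≤ 4 * u ^ (-p) := exp_neg_le_rpow_s10 hu0 hp0 hp2
  have hsplit : u ^ (-p)
      = (16 / Real.pi ^ 4) ^ (-p) * (j : ℝ) ^ (-(4 * p)) * t ^ (-p) := by
    rw [hudef, Real.mul_rpow (by positivity) ht.le,
      Real.mul_rpow hA.le (by positivity)]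
    congr 1
    rw [← Real.rpow_natCast (j : ℝ) 4, ← Real.rpow_mul hj0.le]
    norm_num
  calc Real.exp (-(lam n j) ^ 2 * t) ≤ Real.exp (-u) := hmono
    _ ≤ 4 * u ^ (-p) := hexp
    _ = 4 * (16 / Real.pi ^ 4) ^ (-p) * (j : ℝ) ^ (-(4 * p)) * t ^ (-p) := by
        rw [hsplit]; ring

/-- For every `ε ∈ (0,1)` there is `C_ε > 0` (independent of `n`) such that for every
`n ≥ 2`, `t ∈ (0,T]`, `x, y ∈ [0,π]`:
`|G^n_t(x,y)| ≤ C_ε t^{−1/4−ε}` and `|Δ_n G^n_t(x,y)| ≤ C_ε t^{−3/4−ε}`. -/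
theorem stmt10 (T : ℝ) (hT : 0 < T) (ε : ℝ) (hε : ε ∈ Set.Ioo (0 : ℝ) 1) :
    ∃ C : ℝ, 0 < C ∧ ∀ n : ℕ, 2 ≤ n → ∀ t ∈ Set.Ioc (0 : ℝ) T,
      ∀ x ∈ Set.Icc (0 : ℝ) Real.pi, ∀ y ∈ Set.Icc (0 : ℝ) Real.pi,
      |Gn n t x y| ≤ C * t ^ (-(1 / 4 : ℝ) - ε)
      ∧ |DGn n t x y| ≤ C * t ^ (-(3 / 4 : ℝ) - ε) := by
  obtain ⟨hε0, hε1⟩ := hε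
  have hpi := Real.pi_pos
  -- the convergent series
  have hsummable : Summable (fun j : ℕ => (j : ℝ) ^ (-(1 + 4 * ε))) :=
    Real.summable_nat_rpow.2 (by linarith)
  set S : ℝ := ∑' j : ℕ, (j : ℝ) ^ (-(1 + 4 * ε)) with hSdef
  have hS0 : 0 ≤ S := tsum_nonneg fun j => Real.rpow_nonneg (Nat.cast_nonneg j) _
  set M : ℝ := Real.sqrt (2 / Real.pi) with hMdef
  have hM0 : 0 ≤ M := Real.sqrt_nonneg _
  set p : ℝ := 1 / 4 + ε with hpdef
  set q : ℝ := 3 / 4 + ε with hqdef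
  set K1 : ℝ := M * M * (4 * (16 / Real.pi ^ 4) ^ (-p)) with hK1def
  set K2 : ℝ := M * M * (4 * (16 / Real.pi ^ 4) ^ (-q)) with hK2def
  have hK1 : 0 ≤ K1 := by positivity
  have hK2 : 0 ≤ K2 := by positivity
  refine ⟨K1 * S + K2 * S + 1, by positivity, ?_⟩
  intro n hn t ht x hx y hy
  obtain ⟨ht0, htT⟩ := ht
  have hn0 : 0 < n := by omega
  -- the finite sum of the series is at most S
  have hsum : ∑ j ∈ Finset.Icc 1 (n - 1), (j : ℝ) ^ (-(1 + 4 * ε)) ≤ S :=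
    Summable.sum_le_tsum _ (fun j _ => Real.rpow_nonneg (Nat.cast_nonneg j) _) hsummable
  constructor
  · -- bound on Gn
    have hterm : ∀ j ∈ Finset.Icc 1 (n - 1),
        |Real.exp (-(lam n j) ^ 2 * t) * phiI n j x * phi j (kappa n y)|
          ≤ K1 * t ^ (-p) * (j : ℝ) ^ (-(1 + 4 * ε)) := by
      intro j hj
      rw [Finset.mem_Icc] at hj
      have hj0 : (0 : ℝ) < j := by exact_mod_cast hj.1
      have hexp := exp_term_bound n j hn hj.1 hj.2 ht0
        (p := p) (by rw [hpdef]; linarith) (by rw [hpdef]; linarith)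
      have h4p : -(4 * p) = -(1 + 4 * ε) := by rw [hpdef]; ring
      rw [h4p] at hexp
      have hpos1 : (0 : ℝ) ≤ Real.exp (-(lam n j) ^ 2 * t) := (Real.exp_pos _).le
      have h1 := abs_phiI_le n j hn0 x
      have h2 := abs_phi_le j (kappa n y)
      have habs : |Real.exp (-(lam n j) ^ 2 * t) * phiI n j x * phi j (kappa n y)|
          ≤ Real.exp (-(lam n j) ^ 2 * t) * M * M := by
        rw [abs_mul, abs_mul, abs_of_nonneg hpos1]
        have hA1 : 0 ≤ |phiI n j x| := abs_nonneg _
        exact mul_le_mul (mul_le_mul_of_nonneg_left h1 hpos1) h2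
          (abs_nonneg _) (by positivity)
      have hrpos : (0 : ℝ) ≤ (j : ℝ) ^ (-(1 + 4 * ε)) * t ^ (-p) := by positivity
      calc |Real.exp (-(lam n j) ^ 2 * t) * phiI n j x * phi j (kappa n y)|
          ≤ Real.exp (-(lam n j) ^ 2 * t) * M * M := habs
        _ ≤ (4 * (16 / Real.pi ^ 4) ^ (-p) * (j : ℝ) ^ (-(1 + 4 * ε)) * t ^ (-p))
              * M * M := by
            exact mul_le_mul_of_nonneg_right
              (mul_le_mul_of_nonneg_right hexp hM0) hM0
        _ = K1 * t ^ (-p) * (j : ℝ) ^ (-(1 + 4 * ε)) := by rw [hK1def]; ring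
    have hG : |Gn n t x y| ≤ K1 * t ^ (-p) * S := by
      calc |Gn n t x y|
          ≤ ∑ j ∈ Finset.Icc 1 (n - 1),
              |Real.exp (-(lam n j) ^ 2 * t) * phiI n j x * phi j (kappa n y)| :=
            Finset.abs_sum_le_sum_abs _ _
        _ ≤ ∑ j ∈ Finset.Icc 1 (n - 1),
              K1 * t ^ (-p) * (j : ℝ) ^ (-(1 + 4 * ε)) :=
            Finset.sum_le_sum hterm
        _ = K1 * t ^ (-p) * ∑ j ∈ Finset.Icc 1 (n - 1), (j : ℝ) ^ (-(1 + 4 * ε)) := by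
            rw [← Finset.mul_sum]
        _ ≤ K1 * t ^ (-p) * S := by
            apply mul_le_mul_of_nonneg_left hsum (by positivity)
    have hpe : -(1 / 4 : ℝ) - ε = -p := by rw [hpdef]; ring
    rw [hpe]
    have htp : (0 : ℝ) ≤ t ^ (-p) := by positivity
    calc |Gn n t x y| ≤ K1 * t ^ (-p) * S := hG
      _ = K1 * S * t ^ (-p) := by ring
      _ ≤ (K1 * S + K2 * S + 1) * t ^ (-p) :=
          mul_le_mul_of_nonneg_right (by nlinarith [mul_nonneg hK2 hS0]) htp
  · -- bound on DGn
    have hterm : ∀ j ∈ Finset.Icc 1 (n - 1),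
        |lam n j * Real.exp (-(lam n j) ^ 2 * t) * phiI n j x * phi j (kappa n y)|
          ≤ K2 * t ^ (-q) * (j : ℝ) ^ (-(1 + 4 * ε)) := by
      intro j hj
      rw [Finset.mem_Icc] at hj
      have hj0 : (0 : ℝ) < j := by exact_mod_cast hj.1
      obtain ⟨hl1, hl2⟩ := lam_bounds n j hn hj.1 hj.2
      have hlabs : |lam n j| ≤ (j : ℝ) ^ 2 := by
        have hdiv : (0 : ℝ) ≤ 4 / Real.pi ^ 2 * (j : ℝ) ^ 2 := by positivity
        have hjsq : (0 : ℝ) ≤ (j : ℝ) ^ 2 := sq_nonneg _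
        rw [abs_le]; constructor <;> linarith
      have hexp := exp_term_bound n j hn hj.1 hj.2 ht0
        (p := q) (by rw [hqdef]; linarith) (by rw [hqdef]; linarith)
      have hpos1 : (0 : ℝ) ≤ Real.exp (-(lam n j) ^ 2 * t) := (Real.exp_pos _).le
      have h1 := abs_phiI_le n j hn0 x
      have h2 := abs_phi_le j (kappa n y)
      have habs : |lam n j * Real.exp (-(lam n j) ^ 2 * t) * phiI n j x
            * phi j (kappa n y)|
          ≤ (j : ℝ) ^ 2 * Real.exp (-(lam n j) ^ 2 * t) * M * M := by
        rw [abs_mul, abs_mul, abs_mul, abs_of_nonneg hpos1]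
        have e1 : |lam n j| * Real.exp (-(lam n j) ^ 2 * t)
            ≤ (j : ℝ) ^ 2 * Real.exp (-(lam n j) ^ 2 * t) :=
          mul_le_mul_of_nonneg_right hlabs hpos1
        have e2 : |lam n j| * Real.exp (-(lam n j) ^ 2 * t) * |phiI n j x|
            ≤ (j : ℝ) ^ 2 * Real.exp (-(lam n j) ^ 2 * t) * M :=
          mul_le_mul e1 h1 (abs_nonneg _) (by positivity)
        exact mul_le_mul e2 h2 (abs_nonneg _) (by positivity)
      have hjq : (j : ℝ) ^ 2 * (j : ℝ) ^ (-(4 * q)) = (j : ℝ) ^ (-(1 + 4 * ε)) := by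
        rw [← Real.rpow_natCast (j : ℝ) 2, ← Real.rpow_add hj0]
        congr 1
        rw [hqdef]; push_cast; ring
      have hstep : (j : ℝ) ^ 2 * Real.exp (-(lam n j) ^ 2 * t)
          ≤ (j : ℝ) ^ 2 * (4 * (16 / Real.pi ^ 4) ^ (-q) * (j : ℝ) ^ (-(4 * q))
              * t ^ (-q)) :=
        mul_le_mul_of_nonneg_left hexp (by positivity)
      have hEq : (j : ℝ) ^ 2 * (4 * (16 / Real.pi ^ 4) ^ (-q) * (j : ℝ) ^ (-(4 * q))
              * t ^ (-q)) * M * M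
          = K2 * t ^ (-q) * (j : ℝ) ^ (-(1 + 4 * ε)) := by
        rw [hK2def, ← hjq]; ring
      calc |lam n j * Real.exp (-(lam n j) ^ 2 * t) * phiI n j x * phi j (kappa n y)|
          ≤ (j : ℝ) ^ 2 * Real.exp (-(lam n j) ^ 2 * t) * M * M := habs
        _ ≤ (j : ℝ) ^ 2 * (4 * (16 / Real.pi ^ 4) ^ (-q) * (j : ℝ) ^ (-(4 * q))
              * t ^ (-q)) * M * M := by
            exact mul_le_mul_of_nonneg_right
              (mul_le_mul_of_nonneg_right hstep hM0) hM0
        _ = K2 * t ^ (-q) * (j : ℝ) ^ (-(1 + 4 * ε)) := hEq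
    have hG : |DGn n t x y| ≤ K2 * t ^ (-q) * S := by
      calc |DGn n t x y|
          ≤ ∑ j ∈ Finset.Icc 1 (n - 1),
              |lam n j * Real.exp (-(lam n j) ^ 2 * t) * phiI n j x
                * phi j (kappa n y)| :=
            Finset.abs_sum_le_sum_abs _ _
        _ ≤ ∑ j ∈ Finset.Icc 1 (n - 1),
              K2 * t ^ (-q) * (j : ℝ) ^ (-(1 + 4 * ε)) :=
            Finset.sum_le_sum hterm
        _ = K2 * t ^ (-q) * ∑ j ∈ Finset.Icc 1 (n - 1), (j : ℝ) ^ (-(1 + 4 * ε)) := by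
            rw [← Finset.mul_sum]
        _ ≤ K2 * t ^ (-q) * S := by
            apply mul_le_mul_of_nonneg_left hsum (by positivity)
    have hpe : -(3 / 4 : ℝ) - ε = -q := by rw [hqdef]; ring
    rw [hpe]
    have htp : (0 : ℝ) ≤ t ^ (-q) := by positivity
    calc |DGn n t x y| ≤ K2 * t ^ (-q) * S := hG
      _ = K2 * S * t ^ (-q) := by ring
      _ ≤ (K1 * S + K2 * S + 1) * t ^ (-q) :=
          mul_le_mul_of_nonneg_right (by nlinarith [mul_nonneg hK1 hS0]) htp
end
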